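/- (Lemma 2.1) The set of vectors (x1, x2, x3, X11, X22, X33, X12, X13, X23) ∈ ℝ⁹ such that (x, X) ∈ QPB₃ and 2·x1 + X11 − 2·X12 − 2·X13 + X23 = 0 has affine dimension exactly 5; that is, the direction of the affine span of this set is a linear subspace of ℝ⁹ of dimension 5. -/

import Mathlib

/-- The unit box in ℝ³. -/
def Box3 : Set (Fin 3 → ℝ) := {x | ∀ i, 0 ≤ x i ∧ x i ≤ 1}

/-- `QPB₃`: the convex hull of the rank-one lifted points of the unit box, in the space of
pairs `(x, X)` where `X` is a `3 × 3` real matrix. -/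
noncomputable def QPB3 : Set ((Fin 3 → ℝ) × Matrix (Fin 3) (Fin 3) ℝ) :=
  convexHull ℝ {p | ∃ x ∈ Box3, p = (x, Matrix.of fun i j => x i * x j)}

/-- The points of `QPB₃`, viewed as vectors
`(x1, x2, x3, X11, X22, X33, X12, X13, X23) ∈ ℝ⁹`, on which the constraint
`2·x1 + X11 − 2·X12 − 2·X13 + X23 ≥ 0` is tight. -/
noncomputable def tightFace : Set (Fin 9 → ℝ) :=
  {v | ∃ p ∈ QPB3,
    v = ![p.1 0, p.1 1, p.1 2, p.2 0 0, p.2 1 1, p.2 2 2, p.2 0 1, p.2 0 2, p.2 1 2] ∧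
    2 * p.1 0 + p.2 0 0 - 2 * p.2 0 1 - 2 * p.2 0 2 + p.2 1 2 = 0}

noncomputable def ell : ((Fin 3 → ℝ) × Matrix (Fin 3) (Fin 3) ℝ) →ₗ[ℝ] ℝ where
  toFun p := 2 * p.1 0 + p.2 0 0 - 2 * p.2 0 1 - 2 * p.2 0 2 + p.2 1 2
  map_add' p q := by simp [Matrix.add_apply]; ring
  map_smul' r p := by simp [Matrix.smul_apply, smul_eq_mul]; ring

def Dset : Set ((Fin 3 → ℝ) × Matrix (Fin 3) (Fin 3) ℝ) :=
  {p | p.2 0 0 = p.1 0 ∧ p.2 0 1 = p.1 0 ∧ p.2 0 2 = p.1 0 ∧ p.2 1 2 = p.1 0}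

lemma convex_Dset : Convex ℝ Dset := by
  intro x hx y hy a b ha hb hab
  obtain ⟨h1, h2, h3, h4⟩ := hx
  obtain ⟨k1, k2, k3, k4⟩ := hy
  refine ⟨?_, ?_, ?_, ?_⟩ <;>
    simp [Matrix.add_apply, Matrix.smul_apply, smul_eq_mul, h1, h2, h3, h4,
      k1, k2, k3, k4]

lemma gen_nonneg : ∀ p ∈ {p : (Fin 3 → ℝ) × Matrix (Fin 3) (Fin 3) ℝ |
    ∃ x ∈ Box3, p = (x, Matrix.of fun i j => x i * x j)}, 0 ≤ ell p := by
  rintro p ⟨x, hx, rfl⟩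
  obtain ⟨ha, ha1⟩ := hx 0
  obtain ⟨hb, hb1⟩ := hx 1
  obtain ⟨hc, hc1⟩ := hx 2
  show (0:ℝ) ≤ 2 * x 0 + x 0 * x 0 - 2 * (x 0 * x 1) - 2 * (x 0 * x 2) + x 1 * x 2
  nlinarith [mul_nonneg ha (sub_nonneg.2 hb1), mul_nonneg ha (sub_nonneg.2 hc1),
    mul_nonneg hb hc, sq_nonneg (x 0 - x 1), sq_nonneg (x 0 - x 2),
    mul_nonneg (mul_nonneg hb hc) (sub_nonneg.2 ha1),
    mul_nonneg hc (sub_nonneg.2 hc1), mul_nonneg hb (sub_nonneg.2 hb1),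
    mul_nonneg (sub_nonneg.2 hb1) (sub_nonneg.2 hc1)]

lemma gen_mem_Dset : ∀ p ∈ {p : (Fin 3 → ℝ) × Matrix (Fin 3) (Fin 3) ℝ |
    ∃ x ∈ Box3, p = (x, Matrix.of fun i j => x i * x j)}, ell p = 0 → p ∈ Dset := by
  rintro p ⟨x, hx, rfl⟩ h0
  obtain ⟨ha, ha1⟩ := hx 0
  obtain ⟨hb, hb1⟩ := hx 1
  obtain ⟨hc, hc1⟩ := hx 2
  have hf : 2 * x 0 + x 0 * x 0 - 2 * (x 0 * x 1) - 2 * (x 0 * x 2) + x 1 * x 2 = 0 := h0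
  refine ⟨?_, ?_, ?_, ?_⟩ <;>
    · simp only [Matrix.of_apply]
      nlinarith [mul_nonneg ha (sub_nonneg.2 hb1), mul_nonneg ha (sub_nonneg.2 hc1),
        mul_nonneg hb hc, sq_nonneg (x 0 - x 1), sq_nonneg (x 0 - x 2),
        mul_nonneg (mul_nonneg hb hc) (sub_nonneg.2 ha1),
        mul_nonneg (mul_nonneg ha (sub_nonneg.2 hb1)) (sub_nonneg.2 hc1),
        mul_nonneg (mul_nonneg ha (sub_nonneg.2 hc1)) (sub_nonneg.2 hb1),
        mul_nonneg hc (sub_nonneg.2 hc1), mul_nonneg hb (sub_nonneg.2 hb1),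
        mul_nonneg ha (sub_nonneg.2 ha1)]

lemma mem_Dset_of_tight {p : (Fin 3 → ℝ) × Matrix (Fin 3) (Fin 3) ℝ}
    (hp : p ∈ QPB3) (h0 : ell p = 0) : p ∈ Dset := by
  rw [QPB3, convexHull_eq] at hp
  obtain ⟨ι, t, w, z, hw, hsum, hz, hcm⟩ := hp
  -- restrict to nonzero weights
  rw [← Finset.centerMass_filter_ne_zero] at hcm
  set t' := t.filter (fun i => w i ≠ 0) with ht'
  have hsum' : ∑ i ∈ t', w i = 1 := by
    rw [ht', Finset.sum_filter_ne_zero]; exact hsum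
  have hw' : ∀ i ∈ t', 0 ≤ w i := fun i hi => hw i (Finset.mem_of_mem_filter i hi)
  have hpz : p = ∑ i ∈ t', w i • z i := by
    rw [← hcm, Finset.centerMass_eq_of_sum_1 _ _ hsum']
  -- the sum of nonneg values is zero
  have hterm : ∀ i ∈ t', ell (z i) = 0 := by
    have hsz : ∑ i ∈ t', w i * ell (z i) = 0 := by
      have : ell p = ∑ i ∈ t', w i * ell (z i) := by
        rw [hpz, map_sum]
        exact Finset.sum_congr rfl fun i _ => by rw [map_smul, smul_eq_mul]
      rw [← this, h0]
    have hnn : ∀ i ∈ t', 0 ≤ w i * ell (z i) := fun i hi =>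
      mul_nonneg (hw' i hi) (gen_nonneg (z i) (hz i (Finset.mem_of_mem_filter i hi)))
    intro i hi
    have := (Finset.sum_eq_zero_iff_of_nonneg hnn).1 hsz i hi
    have hwi : w i ≠ 0 := (Finset.mem_filter.1 hi).2
    exact (mul_eq_zero.1 this).resolve_left hwi
  -- hence p is a convex combination of points of Dset
  have hmem : ∀ i ∈ t', z i ∈ Dset := fun i hi =>
    gen_mem_Dset (z i) (hz i (Finset.mem_of_mem_filter i hi)) (hterm i hi)
  have h1 : (0:ℝ) < ∑ i ∈ t', w i := by rw [hsum']; norm_num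
  have := convex_Dset.centerMass_mem hw' h1 hmem
  rwa [Finset.centerMass_eq_of_sum_1 _ _ hsum', ← hpz] at this

def Bf : Fin 5 → (Fin 9 → ℝ) :=
  ![![1,0,0,1,0,0,1,1,1], ![0,1,0,0,0,0,0,0,0], ![0,0,1,0,0,0,0,0,0],
    ![0,0,0,0,1,0,0,0,0], ![0,0,0,0,0,1,0,0,0]]

noncomputable def Wsub : Submodule ℝ (Fin 9 → ℝ) := Submodule.span ℝ (Set.range Bf)

@[simp] lemma vec9_at5 (a₀ a₁ a₂ a₃ a₄ a₅ a₆ a₇ a₈ : ℝ) :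
    ![a₀,a₁,a₂,a₃,a₄,a₅,a₆,a₇,a₈] 5 = a₅ := rfl
@[simp] lemma vec9_at6 (a₀ a₁ a₂ a₃ a₄ a₅ a₆ a₇ a₈ : ℝ) :
    ![a₀,a₁,a₂,a₃,a₄,a₅,a₆,a₇,a₈] 6 = a₆ := rfl
@[simp] lemma vec9_at7 (a₀ a₁ a₂ a₃ a₄ a₅ a₆ a₇ a₈ : ℝ) :
    ![a₀,a₁,a₂,a₃,a₄,a₅,a₆,a₇,a₈] 7 = a₇ := rfl
@[simp] lemma vec9_at8 (a₀ a₁ a₂ a₃ a₄ a₅ a₆ a₇ a₈ : ℝ) :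
    ![a₀,a₁,a₂,a₃,a₄,a₅,a₆,a₇,a₈] 8 = a₈ := rfl

lemma Bf_li : LinearIndependent ℝ Bf := by
  rw [Fintype.linearIndependent_iff]
  intro g hg i
  have h0 := congrFun hg 0
  have h1 := congrFun hg 1
  have h2 := congrFun hg 2
  have h4 := congrFun hg 4
  have h5 := congrFun hg 5
  simp [Fin.sum_univ_five, Bf] at h0 h1 h2 h4 h5
  fin_cases i <;> simp_all

lemma finrank_Wsub : Module.finrank ℝ Wsub = 5 := by
  rw [Wsub, finrank_span_eq_card Bf_li]; simp

lemma tightFace_subset : tightFace ⊆ (Wsub : Set (Fin 9 → ℝ)) := by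
  rintro v ⟨p, hp, rfl, h0⟩
  have hD : p ∈ Dset := mem_Dset_of_tight hp h0
  obtain ⟨e1, e2, e3, e4⟩ := hD
  have hv : ![p.1 0, p.1 1, p.1 2, p.2 0 0, p.2 1 1, p.2 2 2, p.2 0 1, p.2 0 2, p.2 1 2]
      = p.1 0 • Bf 0 + p.1 1 • Bf 1 + p.1 2 • Bf 2 + p.2 1 1 • Bf 3 + p.2 2 2 • Bf 4 := by
    simp [Bf, e1, e2, e3, e4]
  rw [hv]
  have hB : ∀ j, Bf j ∈ Wsub := fun j => Submodule.subset_span ⟨j, rfl⟩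
  exact add_mem (add_mem (add_mem (add_mem (Wsub.smul_mem _ (hB 0)) (Wsub.smul_mem _ (hB 1)))
    (Wsub.smul_mem _ (hB 2))) (Wsub.smul_mem _ (hB 3))) (Wsub.smul_mem _ (hB 4))

lemma lift_mem_tightFace (x : Fin 3 → ℝ) (hx : x ∈ Box3)
    (h0 : 2 * x 0 + x 0 * x 0 - 2 * (x 0 * x 1) - 2 * (x 0 * x 2) + x 1 * x 2 = 0) :
    ![x 0, x 1, x 2, x 0 * x 0, x 1 * x 1, x 2 * x 2, x 0 * x 1, x 0 * x 2, x 1 * x 2]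
      ∈ tightFace :=
  ⟨(x, Matrix.of fun i j => x i * x j), subset_convexHull ℝ _ ⟨x, hx, rfl⟩, rfl, h0⟩

lemma Wsub_le : Wsub ≤ vectorSpan ℝ tightFace := by
  set V := vectorSpan ℝ tightFace with hV
  have hP0 : ![(0:ℝ),0,0,0*0,0*0,0*0,0*0,0*0,0*0] ∈ tightFace :=
    lift_mem_tightFace ![0,0,0] (by intro i; fin_cases i <;> norm_num) (by norm_num)
  have hPb1 : ![(0:ℝ),1,0,0*0,1*1,0*0,0*1,0*0,1*0] ∈ tightFace :=
    lift_mem_tightFace ![0,1,0] (by intro i; fin_cases i <;> norm_num) (by norm_num [show ![(0:ℝ),1,0] 2 = 0 from rfl])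
  have hPbh : ![(0:ℝ),1/2,0,0*0,1/2*(1/2),0*0,0*(1/2),0*0,1/2*0] ∈ tightFace :=
    lift_mem_tightFace ![0,1/2,0] (by intro i; fin_cases i <;> norm_num) (by norm_num [show ![(0:ℝ),1/2,0] 2 = 0 from rfl])
  have hPc1 : ![(0:ℝ),0,1,0*0,0*0,1*1,0*0,0*1,0*1] ∈ tightFace :=
    lift_mem_tightFace ![0,0,1] (by intro i; fin_cases i <;> norm_num) (by norm_num)
  have hPch : ![(0:ℝ),0,1/2,0*0,0*0,1/2*(1/2),0*0,0*(1/2),0*(1/2)] ∈ tightFace :=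
    lift_mem_tightFace ![0,0,1/2] (by intro i; fin_cases i <;> norm_num) (by norm_num)
  have hP1 : ![(1:ℝ),1,1,1*1,1*1,1*1,1*1,1*1,1*1] ∈ tightFace :=
    lift_mem_tightFace ![1,1,1] (by intro i; fin_cases i <;> norm_num) (by norm_num [show ![(1:ℝ),1,1] 2 = 1 from rfl])
  have hd1 : ![(0:ℝ),1,0,0*0,1*1,0*0,0*1,0*0,1*0] - ![(0:ℝ),0,0,0*0,0*0,0*0,0*0,0*0,0*0] ∈ V :=
    vsub_mem_vectorSpan ℝ hPb1 hP0
  have hd2 : ![(0:ℝ),1/2,0,0*0,1/2*(1/2),0*0,0*(1/2),0*0,1/2*0]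
      - ![(0:ℝ),0,0,0*0,0*0,0*0,0*0,0*0,0*0] ∈ V :=
    vsub_mem_vectorSpan ℝ hPbh hP0
  have hd3 : ![(0:ℝ),0,1,0*0,0*0,1*1,0*0,0*1,0*1] - ![(0:ℝ),0,0,0*0,0*0,0*0,0*0,0*0,0*0] ∈ V :=
    vsub_mem_vectorSpan ℝ hPc1 hP0
  have hd4 : ![(0:ℝ),0,1/2,0*0,0*0,1/2*(1/2),0*0,0*(1/2),0*(1/2)]
      - ![(0:ℝ),0,0,0*0,0*0,0*0,0*0,0*0,0*0] ∈ V :=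
    vsub_mem_vectorSpan ℝ hPch hP0
  have hd5 : ![(1:ℝ),1,1,1*1,1*1,1*1,1*1,1*1,1*1] - ![(0:ℝ),0,0,0*0,0*0,0*0,0*0,0*0,0*0] ∈ V :=
    vsub_mem_vectorSpan ℝ hP1 hP0
  rw [Wsub, Submodule.span_le]
  rintro _ ⟨i, rfl⟩
  have hB1 : Bf 1 ∈ V := by
    have e : Bf 1 = (4:ℝ) • (![(0:ℝ),1/2,0,0*0,1/2*(1/2),0*0,0*(1/2),0*0,1/2*0]
        - ![(0:ℝ),0,0,0*0,0*0,0*0,0*0,0*0,0*0])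
        - (![(0:ℝ),1,0,0*0,1*1,0*0,0*1,0*0,1*0] - ![(0:ℝ),0,0,0*0,0*0,0*0,0*0,0*0,0*0]) := by
      funext j
      fin_cases j <;>
        simp only [Bf, Pi.sub_apply, Pi.smul_apply, smul_eq_mul,
          Matrix.cons_val_zero, Matrix.cons_val_one, Matrix.head_cons,
          Matrix.cons_val_two, Matrix.cons_val_three, Matrix.cons_val_four,
          Matrix.tail_cons, vec9_at5, vec9_at6, vec9_at7, vec9_at8] <;>
        norm_num
    rw [e]; exact sub_mem (V.smul_mem _ hd2) hd1
  have hB2 : Bf 2 ∈ V := by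
    have e : Bf 2 = (4:ℝ) • (![(0:ℝ),0,1/2,0*0,0*0,1/2*(1/2),0*0,0*(1/2),0*(1/2)]
        - ![(0:ℝ),0,0,0*0,0*0,0*0,0*0,0*0,0*0])
        - (![(0:ℝ),0,1,0*0,0*0,1*1,0*0,0*1,0*1] - ![(0:ℝ),0,0,0*0,0*0,0*0,0*0,0*0,0*0]) := by
      funext j
      fin_cases j <;>
        simp only [Bf, Pi.sub_apply, Pi.smul_apply, smul_eq_mul,
          Matrix.cons_val_zero, Matrix.cons_val_one, Matrix.head_cons,
          Matrix.cons_val_two, Matrix.cons_val_three, Matrix.cons_val_four,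
          Matrix.tail_cons, vec9_at5, vec9_at6, vec9_at7, vec9_at8] <;>
        norm_num
    rw [e]; exact sub_mem (V.smul_mem _ hd4) hd3
  have hB3 : Bf 3 ∈ V := by
    have e : Bf 3 = (2:ℝ) • (![(0:ℝ),1,0,0*0,1*1,0*0,0*1,0*0,1*0]
        - ![(0:ℝ),0,0,0*0,0*0,0*0,0*0,0*0,0*0])
        - (4:ℝ) • (![(0:ℝ),1/2,0,0*0,1/2*(1/2),0*0,0*(1/2),0*0,1/2*0]
        - ![(0:ℝ),0,0,0*0,0*0,0*0,0*0,0*0,0*0]) := by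
      funext j
      fin_cases j <;>
        simp only [Bf, Pi.sub_apply, Pi.smul_apply, smul_eq_mul,
          Matrix.cons_val_zero, Matrix.cons_val_one, Matrix.head_cons,
          Matrix.cons_val_two, Matrix.cons_val_three, Matrix.cons_val_four,
          Matrix.tail_cons, vec9_at5, vec9_at6, vec9_at7, vec9_at8] <;>
        norm_num
    rw [e]; exact sub_mem (V.smul_mem _ hd1) (V.smul_mem _ hd2)
  have hB4 : Bf 4 ∈ V := by
    have e : Bf 4 = (2:ℝ) • (![(0:ℝ),0,1,0*0,0*0,1*1,0*0,0*1,0*1]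
        - ![(0:ℝ),0,0,0*0,0*0,0*0,0*0,0*0,0*0])
        - (4:ℝ) • (![(0:ℝ),0,1/2,0*0,0*0,1/2*(1/2),0*0,0*(1/2),0*(1/2)]
        - ![(0:ℝ),0,0,0*0,0*0,0*0,0*0,0*0,0*0]) := by
      funext j
      fin_cases j <;>
        simp only [Bf, Pi.sub_apply, Pi.smul_apply, smul_eq_mul,
          Matrix.cons_val_zero, Matrix.cons_val_one, Matrix.head_cons,
          Matrix.cons_val_two, Matrix.cons_val_three, Matrix.cons_val_four,
          Matrix.tail_cons, vec9_at5, vec9_at6, vec9_at7, vec9_at8] <;>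
        norm_num
    rw [e]; exact sub_mem (V.smul_mem _ hd3) (V.smul_mem _ hd4)
  have hB0 : Bf 0 ∈ V := by
    have e : Bf 0 = (![(1:ℝ),1,1,1*1,1*1,1*1,1*1,1*1,1*1]
        - ![(0:ℝ),0,0,0*0,0*0,0*0,0*0,0*0,0*0]) - Bf 1 - Bf 2 - Bf 3 - Bf 4 := by
      funext j
      fin_cases j <;>
        simp only [Bf, Pi.sub_apply, Pi.smul_apply, smul_eq_mul,
          Matrix.cons_val_zero, Matrix.cons_val_one, Matrix.head_cons,
          Matrix.cons_val_two, Matrix.cons_val_three, Matrix.cons_val_four,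
          Matrix.tail_cons, vec9_at5, vec9_at6, vec9_at7, vec9_at8] <;>
        norm_num
    rw [e]; exact sub_mem (sub_mem (sub_mem (sub_mem hd5 hB1) hB2) hB3) hB4
  fin_cases i
  exacts [hB0, hB1, hB2, hB3, hB4]

/-- The face of `QPB₃` on which the constraint is tight has affine dimension exactly 5. -/
theorem tightFace_dim :
    Module.finrank ℝ (affineSpan ℝ tightFace).direction = 5 := by
  rw [direction_affineSpan]
  have hle : vectorSpan ℝ tightFace ≤ Wsub := by
    rw [vectorSpan_def, Submodule.span_le]
    rintro _ ⟨a, ha, b, hb, rfl⟩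
    exact Wsub.sub_mem (tightFace_subset ha) (tightFace_subset hb)
  rw [le_antisymm hle Wsub_le]
  exact finrank_Wsub
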